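/- Let X be a separable metric space with a locally finite Borel measure μ with support X, N ≥ 1, and K : X × X → ℝ^{N×N} bounded, continuous, with K(x,y) = K(y,x)ᵀ for all x,y. Then the following are equivalent: (i) K is positive definite (for all n, x₁,…,xₙ ∈ X, c₁,…,cₙ ∈ ℝ^N: ∑_{i,j} cᵢᵀ K(xᵢ,xⱼ) cⱼ ≥ 0); (ii) ∫_X∫_X f(x)ᵀ K(x,y) f(y) dμ dμ ≥ 0 for all f ∈ C(X,ℝ^N) ∩ L¹(X,ℝ^N); (iii) ∫_X∫_X f(x)ᵀ K(x,y) f(y) dμ dμ ≥ 0 for all f ∈ L¹(X,ℝ^N). -/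

import Mathlib

open MeasureTheory Matrix Filter Topology

/-- Frobenius norm of a real `N × N` matrix. -/
noncomputable def frobNorm {N : ℕ} (A : Matrix (Fin N) (Fin N) ℝ) : ℝ :=
  Real.sqrt (∑ i : Fin N, ∑ j : Fin N, (A i j) ^ 2)

lemma entry_le_frob {N : ℕ} (A : Matrix (Fin N) (Fin N) ℝ) (k l : Fin N) :
    |A k l| ≤ frobNorm A := by
  rw [← Real.sqrt_sq_eq_abs]
  apply Real.sqrt_le_sqrt
  calc A k l ^ 2 ≤ ∑ j : Fin N, (A k j) ^ 2 :=
        Finset.single_le_sum (f := fun j => (A k j) ^ 2) (fun j _ => sq_nonneg _) (Finset.mem_univ l)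
    _ ≤ ∑ i : Fin N, ∑ j : Fin N, (A i j) ^ 2 :=
        Finset.single_le_sum (f := fun i => ∑ j : Fin N, (A i j) ^ 2)
          (fun i _ => Finset.sum_nonneg fun j _ => sq_nonneg _) (Finset.mem_univ k)

lemma dot_bound {N : ℕ} {M : Matrix (Fin N) (Fin N) ℝ} {C : ℝ}
    (hC : ∀ k l, |M k l| ≤ C) (u v : Fin N → ℝ) :
    |u ⬝ᵥ (M *ᵥ v)| ≤ C * ((∑ k, |u k|) * (∑ l, |v l|)) := by
  have expand : u ⬝ᵥ (M *ᵥ v) = ∑ k, ∑ l, u k * M k l * v l := by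
    simp [dotProduct, mulVec, Finset.mul_sum, mul_assoc]
  rw [expand]
  calc |∑ k, ∑ l, u k * M k l * v l| ≤ ∑ k, |∑ l, u k * M k l * v l| :=
        Finset.abs_sum_le_sum_abs _ _
    _ ≤ ∑ k, ∑ l, |u k * M k l * v l| :=
        Finset.sum_le_sum fun k _ => Finset.abs_sum_le_sum_abs _ _
    _ ≤ ∑ k, ∑ l, |u k| * C * |v l| := by
        apply Finset.sum_le_sum; intro k _; apply Finset.sum_le_sum; intro l _
        rw [abs_mul, abs_mul]
        apply mul_le_mul_of_nonneg_right _ (abs_nonneg _)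
        exact mul_le_mul_of_nonneg_left (hC k l) (abs_nonneg _)
    _ = C * ((∑ k, |u k|) * (∑ l, |v l|)) := by
        rw [Finset.sum_mul, Finset.mul_sum]; congr 1; ext k
        rw [Finset.mul_sum, Finset.mul_sum]; congr 1; ext l; ring

section DCT
variable {X : Type*} [MeasurableSpace X] {μ : Measure X} [SigmaFinite μ]

lemma inner_integrable {C : ℝ} {F : X → ℝ} (hF : Integrable F μ)
    {G : X → X → ℝ} (hGm : StronglyMeasurable (fun p : X × X => G p.1 p.2))
    (hbound : ∀ x y, |G x y| ≤ C * (F x * F y)) (x : X) :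
    Integrable (fun y => G x y) μ := by
  refine Integrable.mono' (hF.const_mul (C * F x)) ?_ ?_
  · exact (hGm.comp_measurable measurable_prodMk_left).aestronglyMeasurable
  · refine Filter.Eventually.of_forall fun y => ?_
    simpa [Real.norm_eq_abs, mul_assoc] using hbound x y

lemma inner_integral_bound {C : ℝ} {F : X → ℝ} (hF : Integrable F μ) (hF0 : ∀ x, 0 ≤ F x)
    {G : X → X → ℝ} (hGm : StronglyMeasurable (fun p : X × X => G p.1 p.2))
    (hbound : ∀ x y, |G x y| ≤ C * (F x * F y)) (x : X) :
    ‖∫ y, G x y ∂μ‖ ≤ (C * ∫ y, F y ∂μ) * F x := by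
  have h1 : ‖∫ y, G x y ∂μ‖ ≤ ∫ y, (C * F x) * F y ∂μ := by
    apply norm_integral_le_of_norm_le (hF.const_mul (C * F x))
    refine Filter.Eventually.of_forall fun y => ?_
    simpa [Real.norm_eq_abs, mul_assoc] using hbound x y
  calc ‖∫ y, G x y ∂μ‖ ≤ ∫ y, (C * F x) * F y ∂μ := h1
    _ = (C * ∫ y, F y ∂μ) * F x := by rw [integral_const_mul]; ring

lemma dblDCT {C : ℝ} {F : X → ℝ} (hF : Integrable F μ) (hF0 : ∀ x, 0 ≤ F x)
    {G : ℕ → X → X → ℝ} {g : X → X → ℝ}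
    (hGm : ∀ n, StronglyMeasurable (fun p : X × X => G n p.1 p.2))
    (hgm : StronglyMeasurable (fun p : X × X => g p.1 p.2))
    (hbound : ∀ n x y, |G n x y| ≤ C * (F x * F y))
    (hlim : ∀ x y, Tendsto (fun n => G n x y) atTop (𝓝 (g x y))) :
    Tendsto (fun n => ∫ x, ∫ y, G n x y ∂μ ∂μ) atTop (𝓝 (∫ x, ∫ y, g x y ∂μ ∂μ)) := by
  have hinner : ∀ x, Tendsto (fun n => ∫ y, G n x y ∂μ) atTop (𝓝 (∫ y, g x y ∂μ)) := by
    intro x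
    apply tendsto_integral_of_dominated_convergence (fun y => (C * F x) * F y)
    · exact fun n => ((hGm n).comp_measurable measurable_prodMk_left).aestronglyMeasurable
    · exact hF.const_mul _
    · intro n
      refine Filter.Eventually.of_forall fun y => ?_
      simpa [Real.norm_eq_abs, mul_assoc] using hbound n x y
    · exact Filter.Eventually.of_forall fun y => hlim x y
  apply tendsto_integral_of_dominated_convergence (fun x => (C * ∫ y, F y ∂μ) * F x)
  · exact fun n => ((hGm n).integral_prod_right').aestronglyMeasurable
  · exact hF.const_mul _
  · intro n
    exact Filter.Eventually.of_forall fun x =>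
      inner_integral_bound hF hF0 (hGm n) (hbound n) x
  · exact Filter.Eventually.of_forall hinner

end DCT

lemma dot_expand {N : ℕ} (u v : Fin N → ℝ) (M : Matrix (Fin N) (Fin N) ℝ) :
    u ⬝ᵥ (M *ᵥ v) = ∑ k, ∑ l, u k * M k l * v l := by
  simp [dotProduct, mulVec, Finset.mul_sum, mul_assoc]

lemma cont_quad {N : ℕ} (u v : Fin N → ℝ) :
    Continuous fun M : Matrix (Fin N) (Fin N) ℝ => u ⬝ᵥ (M *ᵥ v) := by
  simp only [dotProduct, mulVec]; fun_prop

lemma pure_bilin {N n : ℕ} (a b : Fin n → ℝ) (u v : Fin n → Fin N → ℝ)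
    (M : Matrix (Fin N) (Fin N) ℝ) :
    (fun k => ∑ i, a i * u i k) ⬝ᵥ (M *ᵥ fun l => ∑ j, b j * v j l) =
      ∑ i, ∑ j, a i * (b j * (u i ⬝ᵥ (M *ᵥ v j))) := by
  rw [dot_expand]
  have step : ∀ k l : Fin N, (∑ i, a i * u i k) * M k l * (∑ j, b j * v j l)
      = ∑ i, ∑ j, a i * (b j * (u i k * M k l * v j l)) := by
    intro k l
    rw [Finset.sum_mul, Finset.sum_mul]
    apply Finset.sum_congr rfl; intro i _
    rw [Finset.mul_sum]
    apply Finset.sum_congr rfl; intro j _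
    ring
  calc ∑ k, ∑ l, (∑ i, a i * u i k) * M k l * (∑ j, b j * v j l)
      = ∑ k, ∑ l, ∑ i, ∑ j, a i * (b j * (u i k * M k l * v j l)) := by
        exact Finset.sum_congr rfl fun k _ => Finset.sum_congr rfl fun l _ => step k l
    _ = ∑ k, ∑ i, ∑ l, ∑ j, a i * (b j * (u i k * M k l * v j l)) := by
        exact Finset.sum_congr rfl fun k _ => Finset.sum_comm
    _ = ∑ i, ∑ k, ∑ l, ∑ j, a i * (b j * (u i k * M k l * v j l)) := Finset.sum_comm
    _ = ∑ i, ∑ k, ∑ j, ∑ l, a i * (b j * (u i k * M k l * v j l)) := by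
        exact Finset.sum_congr rfl fun i _ => Finset.sum_congr rfl fun k _ => Finset.sum_comm
    _ = ∑ i, ∑ j, ∑ k, ∑ l, a i * (b j * (u i k * M k l * v j l)) := by
        exact Finset.sum_congr rfl fun i _ => Finset.sum_comm
    _ = ∑ i, ∑ j, a i * (b j * (u i ⬝ᵥ (M *ᵥ v j))) := by
        apply Finset.sum_congr rfl; intro i _
        apply Finset.sum_congr rfl; intro j _
        rw [dot_expand, Finset.mul_sum, Finset.mul_sum]
        apply Finset.sum_congr rfl; intro k _
        rw [Finset.mul_sum, Finset.mul_sum]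

lemma integrable_mul_bdd {X : Type*} [MeasurableSpace X] {μ : Measure X} {g h : X → ℝ}
    (hg : Integrable g μ) (hh : AEStronglyMeasurable h μ) {c : ℝ} (hc : ∀ x, |h x| ≤ c) :
    Integrable (fun x => g x * h x) μ := by
  have h1 : Integrable (fun x => h x * g x) μ :=
    Integrable.bdd_mul hg hh (Filter.Eventually.of_forall fun x => by
      simpa [Real.norm_eq_abs] using hc x)
  apply h1.congr
  filter_upwards with x using mul_comm _ _

section Decomp
variable {X : Type*} [MeasurableSpace X] {μ : Measure X}

lemma decomp {ρ : X → ℕ} (hρ : Measurable ρ) (M : ℕ) {v : X → ℝ}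
    (hv : Integrable v μ) (hv0 : ∀ z, M ≤ ρ z → v z = 0) :
    ∫ z, v z ∂μ = ∑ k ∈ Finset.range M, ∫ z in ρ ⁻¹' {k}, v z ∂μ := by
  have hS : MeasurableSet (ρ ⁻¹' (Set.Iio M)) := hρ measurableSet_Iio
  have h1 : ∫ z, v z ∂μ = ∫ z in ρ ⁻¹' (Set.Iio M), v z ∂μ := by
    calc ∫ z, v z ∂μ = ∫ z, (ρ ⁻¹' (Set.Iio M)).indicator v z ∂μ := by
          apply integral_congr_ae
          refine Filter.Eventually.of_forall fun z => ?_
          by_cases hz : z ∈ ρ ⁻¹' (Set.Iio M)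
          · rw [Set.indicator_of_mem hz]
          · rw [Set.indicator_of_notMem hz]; exact hv0 z (not_lt.1 hz)
      _ = ∫ z in ρ ⁻¹' (Set.Iio M), v z ∂μ := integral_indicator hS
  have h2 : ρ ⁻¹' (Set.Iio M) = ⋃ k ∈ Finset.range M, ρ ⁻¹' {k} := by
    ext z
    simp only [Set.mem_preimage, Set.mem_Iio, Set.mem_iUnion, Set.mem_singleton_iff,
      Finset.mem_range, exists_prop]
    constructor
    · intro h; exact ⟨ρ z, h, rfl⟩
    · rintro ⟨k, hk, hzk⟩; rw [hzk]; exact hk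
  rw [h1, h2]
  apply integral_biUnion_finset
  · exact fun k _ => hρ (measurableSet_singleton k)
  · intro i _ j _ hij
    exact Set.disjoint_left.2 fun z hzi hzj => hij (by
      rw [Set.mem_preimage, Set.mem_singleton_iff] at hzi hzj
      rw [← hzi, ← hzj])
  · exact fun k _ => hv.integrableOn

end Decomp

section Dir21
variable {X : Type*} [MetricSpace X] [TopologicalSpace.SeparableSpace X]
  [MeasurableSpace X] [BorelSpace X] {μ : Measure X} [IsLocallyFiniteMeasure μ] {N : ℕ}

lemma dir21 (hsupp : ∀ U : Set X, IsOpen U → U.Nonempty → 0 < μ U)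
    (hN : 1 ≤ N) (K : X → X → Matrix (Fin N) (Fin N) ℝ)
    (hKcont : Continuous (fun p : X × X => K p.1 p.2))
    {C : ℝ} (hC : ∀ (x y : X) (k l : Fin N), |K x y k l| ≤ C)
    (h2 : ∀ f : X → EuclideanSpace ℝ (Fin N), Continuous f → Integrable f μ →
        0 ≤ ∫ x, ∫ y, (f x) ⬝ᵥ ((K x y) *ᵥ (f y)) ∂μ ∂μ)
    (n : ℕ) (x : Fin n → X) (c : Fin n → Fin N → ℝ) :
    0 ≤ ∑ i : Fin n, ∑ j : Fin n, c i ⬝ᵥ ((K (x i) (x j)) *ᵥ c j) := by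
  haveI : SecondCountableTopology X := UniformSpace.secondCountable_of_separable X
  rcases Nat.eq_zero_or_pos n with hn | hn
  · subst hn; simp
  haveI : Nonempty (Fin n) := ⟨⟨0, hn⟩⟩
  haveI : Nonempty (Fin N) := ⟨⟨0, hN⟩⟩
  apply le_of_forall_pos_le_add
  intro ε hε
  -- notation
  set T : ℝ := ∑ i : Fin n, ∑ k : Fin N, |c i k| with hT
  have hT0 : 0 ≤ T := Finset.sum_nonneg fun i _ => Finset.sum_nonneg fun k _ => abs_nonneg _
  set e : ℝ := ε / (T ^ 2 + 1) with he_def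
  have he : 0 < e := div_pos hε (by positivity)
  -- radii of finite measure
  have hrad : ∀ i : Fin n, ∃ r : ℝ, 0 < r ∧ μ (Metric.ball (x i) r) < ⊤ := by
    intro i
    obtain ⟨s, hs, hμs⟩ := μ.finiteAt_nhds (x i)
    rcases Metric.mem_nhds_iff.1 hs with ⟨r, hr0, hball⟩
    exact ⟨r, hr0, lt_of_le_of_lt (measure_mono hball) hμs⟩
  choose r hr0 hrμ using hrad
  -- continuity moduli
  have hco : ∀ (i j : Fin n) (k l : Fin N), ∃ δ : ℝ, 0 < δ ∧ ∀ a b : X,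
      dist a (x i) < δ → dist b (x j) < δ → |K a b k l - K (x i) (x j) k l| ≤ e := by
    intro i j k l
    have hc' : ContinuousAt (fun p : X × X => K p.1 p.2 k l) (x i, x j) :=
      (((continuous_apply l).comp ((continuous_apply k).comp hKcont))).continuousAt
    rw [Metric.continuousAt_iff] at hc'
    obtain ⟨δ, hδ0, hδ⟩ := hc' e he
    refine ⟨δ, hδ0, fun a b ha hb => ?_⟩
    have hd : dist ((a, b) : X × X) (x i, x j) < δ := by
      rw [Prod.dist_eq]; exact max_lt ha hb
    have := hδ hd
    rw [Real.dist_eq] at this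
    exact this.le
  choose δf hδf0 hδf using hco
  set δ₀ : ℝ := min
      (Finset.univ.inf' Finset.univ_nonempty
        (fun p : Fin n × Fin n × Fin N × Fin N => δf p.1 p.2.1 p.2.2.1 p.2.2.2))
      (Finset.univ.inf' Finset.univ_nonempty r) with hδ₀def
  have hδ₀pos : 0 < δ₀ := by
    apply lt_min
    · exact (Finset.lt_inf'_iff _).2 fun p _ => hδf0 p.1 p.2.1 p.2.2.1 p.2.2.2
    · exact (Finset.lt_inf'_iff _).2 fun i _ => hr0 i
  have hδ₀A : ∀ (i j : Fin n) (k l : Fin N), δ₀ ≤ δf i j k l := fun i j k l =>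
    (min_le_left _ _).trans (Finset.inf'_le _ (Finset.mem_univ (i, j, k, l)))
  have hδ₀B : ∀ i : Fin n, δ₀ ≤ r i := fun i =>
    (min_le_right _ _).trans (Finset.inf'_le _ (Finset.mem_univ i))
  have hballfin : ∀ i, μ (Metric.ball (x i) δ₀) < ⊤ := fun i =>
    lt_of_le_of_lt (measure_mono (Metric.ball_subset_ball (hδ₀B i))) (hrμ i)
  -- the quadratic form and its modulus
  set Q : Fin n → Fin n → X → X → ℝ := fun i j a b => c i ⬝ᵥ (K a b *ᵥ c j) with hQdef
  have hQcont : ∀ i j, Continuous fun p : X × X => Q i j p.1 p.2 := fun i j =>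
    (cont_quad (c i) (c j)).comp hKcont
  set CQ : Fin n → Fin n → ℝ :=
    fun i j => C * ((∑ k, |c i k|) * (∑ l, |c j l|)) with hCQdef
  have hQbdd : ∀ i j (a b : X), |Q i j a b| ≤ CQ i j := fun i j a b =>
    dot_bound (hC a b) _ _
  set Ce : Fin n → Fin n → ℝ :=
    fun i j => e * ((∑ k, |c i k|) * (∑ l, |c j l|)) with hCedef
  have hCe0 : ∀ i j, 0 ≤ Ce i j := fun i j => by
    apply mul_nonneg he.le
    exact mul_nonneg (Finset.sum_nonneg fun k _ => abs_nonneg _)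
      (Finset.sum_nonneg fun l _ => abs_nonneg _)
  have hQe : ∀ (i j : Fin n) (a b : X), dist a (x i) < δ₀ → dist b (x j) < δ₀ →
      |Q i j a b - Q i j (x i) (x j)| ≤ Ce i j := by
    intro i j a b ha hb
    have : Q i j a b - Q i j (x i) (x j) = c i ⬝ᵥ ((K a b - K (x i) (x j)) *ᵥ c j) := by
      rw [hQdef]; dsimp only
      rw [Matrix.sub_mulVec, dotProduct_sub]
    rw [this]
    apply dot_bound
    intro k l
    have := hδf i j k l a b (lt_of_lt_of_le ha (hδ₀A i j k l)) (lt_of_lt_of_le hb (hδ₀A i j k l))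
    simpa [Matrix.sub_apply] using this
  -- bump functions
  set φ : Fin n → X → ℝ := fun i z => max 0 (1 - dist z (x i) / δ₀) with hφdef
  have hφcont : ∀ i, Continuous (φ i) := fun i =>
    continuous_const.max ((continuous_const.sub ((continuous_id.dist continuous_const).div_const δ₀)))
  have hφ0 : ∀ i z, 0 ≤ φ i z := fun i z => le_max_left _ _
  have hφle1 : ∀ i z, φ i z ≤ 1 := fun i z => by
    apply max_le zero_le_one
    have : 0 ≤ dist z (x i) / δ₀ := div_nonneg dist_nonneg hδ₀pos.le
    linarith
  have hφout : ∀ i z, δ₀ ≤ dist z (x i) → φ i z = 0 := fun i z h =>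
    max_eq_left (sub_nonpos.2 ((one_le_div hδ₀pos).2 h))
  have hφin : ∀ i z, dist z (x i) < δ₀ / 2 → 1 / 2 ≤ φ i z := by
    intro i z h
    have h1 : dist z (x i) / δ₀ ≤ 1 / 2 := by
      rw [div_le_div_iff₀ hδ₀pos (by norm_num : (0:ℝ) < 2)]
      linarith
    refine le_trans ?_ (le_max_right _ _)
    linarith
  have hφint : ∀ i, Integrable (φ i) μ := by
    intro i
    have hind : Integrable ((Metric.ball (x i) δ₀).indicator fun _ => (1 : ℝ)) μ := by
      rw [integrable_indicator_iff measurableSet_ball]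
      exact integrableOn_const (hballfin i).ne
    apply Integrable.mono' hind ((hφcont i).aestronglyMeasurable)
    refine Filter.Eventually.of_forall fun z => ?_
    rw [Real.norm_eq_abs, abs_of_nonneg (hφ0 i z)]
    by_cases hz : z ∈ Metric.ball (x i) δ₀
    · rw [Set.indicator_of_mem hz]; exact hφle1 i z
    · rw [Set.indicator_of_notMem hz]
      have : δ₀ ≤ dist z (x i) := not_lt.1 (fun hlt => hz (Metric.mem_ball.2 hlt))
      rw [hφout i z this]
  set mμ : Fin n → ℝ := fun i => ∫ z, φ i z ∂μ with hmdef
  have hm_pos : ∀ i, 0 < mμ i := by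
    intro i
    have hs0 : 0 < μ (Metric.ball (x i) (δ₀ / 2)) :=
      hsupp _ Metric.isOpen_ball ⟨x i, Metric.mem_ball_self (by positivity)⟩
    have hsfin : μ (Metric.ball (x i) (δ₀ / 2)) < ⊤ :=
      lt_of_le_of_lt (measure_mono (Metric.ball_subset_ball (by linarith))) (hballfin i)
    have hindint : Integrable ((Metric.ball (x i) (δ₀ / 2)).indicator fun _ => (1:ℝ)/2) μ := by
      rw [integrable_indicator_iff measurableSet_ball]
      exact integrableOn_const hsfin.ne
    have h1 : ∫ z, (Metric.ball (x i) (δ₀ / 2)).indicator (fun _ => (1:ℝ)/2) z ∂μ ≤ mμ i := by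
      apply integral_mono hindint (hφint i)
      intro z
      by_cases hz : z ∈ Metric.ball (x i) (δ₀ / 2)
      · rw [Set.indicator_of_mem hz]; exact hφin i z (Metric.mem_ball.1 hz)
      · rw [Set.indicator_of_notMem hz]; exact hφ0 i z
    rw [integral_indicator_const _ measurableSet_ball, smul_eq_mul] at h1
    have htr : 0 < (μ (Metric.ball (x i) (δ₀ / 2))).toReal :=
      ENNReal.toReal_pos hs0.ne' hsfin.ne
    rw [measureReal_def] at h1
    nlinarith
  set ψ : Fin n → X → ℝ := fun i z => (mμ i)⁻¹ * φ i z with hψdef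
  have hψcont : ∀ i, Continuous (ψ i) := fun i => continuous_const.mul (hφcont i)
  have hψ0 : ∀ i z, 0 ≤ ψ i z := fun i z =>
    mul_nonneg (inv_nonneg.2 (hm_pos i).le) (hφ0 i z)
  have hψint : ∀ i, Integrable (ψ i) μ := fun i => (hφint i).const_mul _
  have hψmass : ∀ i, ∫ z, ψ i z ∂μ = 1 := by
    intro i
    rw [hψdef]; dsimp only
    rw [integral_const_mul]
    exact inv_mul_cancel₀ (hm_pos i).ne'
  have hψout : ∀ i z, δ₀ ≤ dist z (x i) → ψ i z = 0 := fun i z h => by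
    rw [hψdef]; dsimp only; rw [hφout i z h, mul_zero]
  -- the test function
  set vc : Fin n → EuclideanSpace ℝ (Fin N) := fun i => WithLp.toLp 2 (c i) with hvcdef
  set f₀ : X → EuclideanSpace ℝ (Fin N) := fun z => ∑ i, ψ i z • vc i with hf₀def
  have hf₀cont : Continuous f₀ :=
    continuous_finset_sum _ fun i _ => ((hψcont i).smul continuous_const)
  have hf₀int : Integrable f₀ μ :=
    integrable_finset_sum _ fun i _ => ((hψint i).smul_const (vc i))
  have h2' := h2 f₀ hf₀cont hf₀int
  have hf₀k : ∀ z (k : Fin N), f₀ z k = ∑ i, ψ i z * c i k := by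
    intro z k
    calc f₀ z k = EuclideanSpace.proj (𝕜 := ℝ) k (f₀ z) := rfl
      _ = ∑ i, ψ i z * c i k := by
          rw [hf₀def]; dsimp only
          rw [map_sum]
          apply Finset.sum_congr rfl
          intro i _
          rw [ContinuousLinearMap.map_smul]
          rfl
  -- pointwise expansion
  have hpt : ∀ a b : X, (f₀ a) ⬝ᵥ ((K a b) *ᵥ (f₀ b)) =
      ∑ i, ∑ j, ψ i a * (ψ j b * Q i j a b) := by
    intro a b
    have h1 : (f₀ a : Fin N → ℝ) = fun k => ∑ i, ψ i a * c i k := funext (hf₀k a)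
    have h2'' : (f₀ b : Fin N → ℝ) = fun l => ∑ j, ψ j b * c j l := funext (hf₀k b)
    rw [h1, h2'']
    exact pure_bilin _ _ _ _ _

  -- inner integrability
  have hQmeas_y : ∀ (i j : Fin n) (a : X), Continuous fun y => Q i j a y := fun i j a =>
    (hQcont i j).comp (Continuous.prodMk_right a)
  have hinnerInt : ∀ (i j : Fin n) (a : X), Integrable (fun y => ψ j y * Q i j a y) μ :=
    fun i j a => integrable_mul_bdd (hψint j) ((hQmeas_y i j a).aestronglyMeasurable)
      (fun y => hQbdd i j a y)
  set B : Fin n → Fin n → X → ℝ := fun i j a => ∫ y, ψ j y * Q i j a y ∂μ with hBdef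
  have hBbdd : ∀ i j a, |B i j a| ≤ CQ i j := by
    intro i j a
    have h1 : ‖∫ y, ψ j y * Q i j a y ∂μ‖ ≤ ∫ y, ψ j y * CQ i j ∂μ := by
      apply norm_integral_le_of_norm_le ((hψint j).mul_const _)
      refine Filter.Eventually.of_forall fun y => ?_
      rw [Real.norm_eq_abs, abs_mul, abs_of_nonneg (hψ0 j y)]
      exact mul_le_mul_of_nonneg_left (hQbdd i j a y) (hψ0 j y)
    rw [integral_mul_const, hψmass j, one_mul, Real.norm_eq_abs] at h1
    exact h1
  have hBmeas : ∀ i j, StronglyMeasurable (B i j) := by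
    intro i j
    have hjoint : StronglyMeasurable (fun p : X × X => ψ j p.2 * Q i j p.1 p.2) :=
      (((hψcont j).comp continuous_snd).mul (hQcont i j)).stronglyMeasurable
    exact hjoint.integral_prod_right'
  have hinner_eq : ∀ a : X, ∫ y, (f₀ a) ⬝ᵥ ((K a y) *ᵥ (f₀ y)) ∂μ
      = ∑ i, ∑ j, ψ i a * B i j a := by
    intro a
    rw [show (fun y => (f₀ a) ⬝ᵥ ((K a y) *ᵥ (f₀ y)))
        = fun y => ∑ i, ∑ j, ψ i a * (ψ j y * Q i j a y) from funext fun y => hpt a y]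
    rw [integral_finset_sum _ (fun i _ =>
      integrable_finset_sum _ fun j _ => (hinnerInt i j a).const_mul _)]
    apply Finset.sum_congr rfl; intro i _
    rw [integral_finset_sum _ (fun j _ => (hinnerInt i j a).const_mul _)]
    apply Finset.sum_congr rfl; intro j _
    exact integral_const_mul _ _
  have houterInt : ∀ i j, Integrable (fun a => ψ i a * B i j a) μ := fun i j =>
    integrable_mul_bdd (hψint i) (hBmeas i j).aestronglyMeasurable (fun a => hBbdd i j a)
  set A : Fin n → Fin n → ℝ := fun i j => ∫ a, ψ i a * B i j a ∂μ with hAdef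
  have hIeq : ∫ x', ∫ y, (f₀ x') ⬝ᵥ ((K x' y) *ᵥ (f₀ y)) ∂μ ∂μ = ∑ i, ∑ j, A i j := by
    rw [show (fun x' => ∫ y, (f₀ x') ⬝ᵥ ((K x' y) *ᵥ (f₀ y)) ∂μ)
        = fun x' => ∑ i, ∑ j, ψ i x' * B i j x' from funext hinner_eq]
    rw [integral_finset_sum _ (fun i _ => integrable_finset_sum _ fun j _ => houterInt i j)]
    exact Finset.sum_congr rfl fun i _ =>
      integral_finset_sum _ fun j _ => houterInt i j
  have hAQ : ∀ i j, |A i j - Q i j (x i) (x j)| ≤ Ce i j := by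
    intro i j
    set Q₀ := Q i j (x i) (x j) with hQ₀
    have hstep1 : ∀ a : X, dist a (x i) < δ₀ → |B i j a - Q₀| ≤ Ce i j := by
      intro a ha
      have hsub : B i j a - Q₀ = ∫ y, ψ j y * (Q i j a y - Q₀) ∂μ := by
        have hm2 : ∫ y, ψ j y * Q₀ ∂μ = Q₀ := by rw [integral_mul_const, hψmass j, one_mul]
        rw [show (fun y => ψ j y * (Q i j a y - Q₀))
            = fun y => ψ j y * Q i j a y - ψ j y * Q₀ from funext fun y => by ring]
        rw [integral_sub (hinnerInt i j a) ((hψint j).mul_const _), hm2]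
      rw [hsub]
      have hb : ‖∫ y, ψ j y * (Q i j a y - Q₀) ∂μ‖ ≤ ∫ y, ψ j y * Ce i j ∂μ := by
        apply norm_integral_le_of_norm_le ((hψint j).mul_const _)
        refine Filter.Eventually.of_forall fun y => ?_
        rw [Real.norm_eq_abs, abs_mul, abs_of_nonneg (hψ0 j y)]
        by_cases hy : dist y (x j) < δ₀
        · exact mul_le_mul_of_nonneg_left (hQe i j a y ha hy) (hψ0 j y)
        · rw [hψout j y (not_lt.1 hy)]; simp
      rw [integral_mul_const, hψmass j, one_mul, Real.norm_eq_abs] at hb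
      exact hb
    have hsub : A i j - Q₀ = ∫ a, ψ i a * (B i j a - Q₀) ∂μ := by
      have hm2 : ∫ a, ψ i a * Q₀ ∂μ = Q₀ := by rw [integral_mul_const, hψmass i, one_mul]
      rw [show (fun a => ψ i a * (B i j a - Q₀))
          = fun a => ψ i a * B i j a - ψ i a * Q₀ from funext fun a => by ring]
      rw [integral_sub (houterInt i j) ((hψint i).mul_const _), hm2]
    rw [hsub]
    have hb : ‖∫ a, ψ i a * (B i j a - Q₀) ∂μ‖ ≤ ∫ a, ψ i a * Ce i j ∂μ := by
      apply norm_integral_le_of_norm_le ((hψint i).mul_const _)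
      refine Filter.Eventually.of_forall fun a => ?_
      rw [Real.norm_eq_abs, abs_mul, abs_of_nonneg (hψ0 i a)]
      by_cases hax : dist a (x i) < δ₀
      · exact mul_le_mul_of_nonneg_left (hstep1 a hax) (hψ0 i a)
      · rw [hψout i a (not_lt.1 hax)]; simp
    rw [integral_mul_const, hψmass i, one_mul, Real.norm_eq_abs] at hb
    exact hb
  have h1 : (∑ i, ∑ j, A i j) - ∑ i, ∑ j, Q i j (x i) (x j)
      = ∑ i, ∑ j, (A i j - Q i j (x i) (x j)) := by
    rw [← Finset.sum_sub_distrib]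
    exact Finset.sum_congr rfl fun i _ => (Finset.sum_sub_distrib _ _).symm
  have h2sum : ∑ i, ∑ j, Ce i j = e * (T * T) := by
    rw [hT, Finset.sum_mul_sum, Finset.mul_sum]
    apply Finset.sum_congr rfl; intro i _
    rw [Finset.mul_sum]
  have hetT : e * (T * T) ≤ ε := by
    rw [he_def, div_mul_eq_mul_div, div_le_iff₀ (by positivity)]
    nlinarith [sq_nonneg T]
  have hdiff : |(∑ i, ∑ j, A i j) - ∑ i, ∑ j, Q i j (x i) (x j)| ≤ ε := by
    rw [h1]
    calc |∑ i, ∑ j, (A i j - Q i j (x i) (x j))|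
        ≤ ∑ i, |∑ j, (A i j - Q i j (x i) (x j))| := Finset.abs_sum_le_sum_abs _ _
      _ ≤ ∑ i, ∑ j, |A i j - Q i j (x i) (x j)| :=
          Finset.sum_le_sum fun i _ => Finset.abs_sum_le_sum_abs _ _
      _ ≤ ∑ i, ∑ j, Ce i j :=
          Finset.sum_le_sum fun i _ => Finset.sum_le_sum fun j _ => hAQ i j
      _ = e * (T * T) := h2sum
      _ ≤ ε := hetT
  rw [hIeq] at h2'
  have habs := abs_le.1 hdiff
  show 0 ≤ (∑ i, ∑ j, Q i j (x i) (x j)) + ε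
  linarith [h2', habs.1, habs.2]
end Dir21


section Dir13
variable {X : Type*} [MetricSpace X] [TopologicalSpace.SeparableSpace X]
  [MeasurableSpace X] [BorelSpace X] {μ : Measure X} [IsLocallyFiniteMeasure μ] {N : ℕ}

lemma dir13 (hN : 1 ≤ N) (K : X → X → Matrix (Fin N) (Fin N) ℝ)
    (hKcont : Continuous (fun p : X × X => K p.1 p.2))
    {C : ℝ} (hC : ∀ (x y : X) (k l : Fin N), |K x y k l| ≤ C)
    (h1 : ∀ (n : ℕ) (x : Fin n → X) (c : Fin n → Fin N → ℝ),
        0 ≤ ∑ i : Fin n, ∑ j : Fin n, c i ⬝ᵥ ((K (x i) (x j)) *ᵥ c j))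
    (f : X → EuclideanSpace ℝ (Fin N)) (hf : Integrable f μ) :
    0 ≤ ∫ x, ∫ y, (f x) ⬝ᵥ ((K x y) *ᵥ (f y)) ∂μ ∂μ := by
  haveI : SecondCountableTopology X := UniformSpace.secondCountable_of_separable X
  rcases isEmpty_or_nonempty X with hX | hX
  · rw [μ.eq_zero_of_isEmpty]; simp
  have hC0 : 0 ≤ C :=
    le_trans (abs_nonneg _) (hC hX.some hX.some ⟨0, hN⟩ ⟨0, hN⟩)
  -- replace f by a strongly measurable representative
  obtain ⟨f', hf'sm, hf'ae⟩ : ∃ f' : X → EuclideanSpace ℝ (Fin N),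
      StronglyMeasurable f' ∧ f =ᵐ[μ] f' :=
    ⟨hf.1.mk f, hf.1.stronglyMeasurable_mk, hf.1.ae_eq_mk⟩
  have hf'int : Integrable f' μ := hf.congr hf'ae
  have heq : ∫ x, ∫ y, (f x) ⬝ᵥ ((K x y) *ᵥ (f y)) ∂μ ∂μ
      = ∫ x, ∫ y, (f' x) ⬝ᵥ ((K x y) *ᵥ (f' y)) ∂μ ∂μ := by
    apply integral_congr_ae
    filter_upwards [hf'ae] with x hx
    apply integral_congr_ae
    filter_upwards [hf'ae] with y hy
    rw [hx, hy]
  rw [heq]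
  -- components and dominating function
  set F : X → ℝ := fun x => ∑ k, |f' x k| with hFdef
  have hcomp_meas : ∀ k : Fin N, StronglyMeasurable (fun x => f' x k) := fun k =>
    (EuclideanSpace.proj (𝕜 := ℝ) k).continuous.comp_stronglyMeasurable hf'sm
  have hcomp_int : ∀ k : Fin N, Integrable (fun x => f' x k) μ := fun k =>
    (EuclideanSpace.proj (𝕜 := ℝ) k : EuclideanSpace ℝ (Fin N) →L[ℝ] ℝ).integrable_comp hf'int
  have hFint : Integrable F μ := integrable_finset_sum _ fun k _ => (hcomp_int k).abs
  have hF0 : ∀ x, 0 ≤ F x := fun x => Finset.sum_nonneg fun k _ => abs_nonneg _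
  -- dense sequence and cell maps
  set q : ℕ → X := TopologicalSpace.denseSeq X with hqdef
  have hdense : DenseRange q := TopologicalSpace.denseRange_denseSeq X
  have hex : ∀ (n : ℕ) (z : X), ∃ k, dist z (q k) < 1 / (n + 1) :=
    fun n z => hdense.exists_dist_lt z (by positivity)
  set m : ℕ → X → ℕ := fun n z => Nat.find (hex n z) with hmdef
  have hmdist : ∀ n z, dist z (q (m n z)) < 1 / (n + 1) := fun n z => Nat.find_spec (hex n z)
  have hmmeas : ∀ n, Measurable (m n) := by
    intro n
    apply measurable_find
    intro k
    exact (measurableSet_ball : MeasurableSet (Metric.ball (q k) (1 / (n + 1))))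
  set cn : ℕ → X → X := fun n z => q (m n z) with hcndef
  have hcnmeas : ∀ n, Measurable (cn n) := fun n => measurable_from_top.comp (hmmeas n)
  have hcn_tendsto : ∀ z : X, Filter.Tendsto (fun n => cn n z) Filter.atTop (nhds z) := by
    intro z
    rw [tendsto_iff_dist_tendsto_zero]
    apply squeeze_zero (fun n => dist_nonneg) (g := fun n : ℕ => 1 / (n + 1))
    · intro n
      rw [dist_comm]
      exact (hmdist n z).le
    · exact tendsto_one_div_add_atTop_nhds_zero_nat
  -- kernels
  set g : X → X → ℝ := fun a b => (f' a) ⬝ᵥ ((K a b) *ᵥ (f' b)) with hgdef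
  set G : ℕ → X → X → ℝ := fun n a b => (f' a) ⬝ᵥ ((K (cn n a) (cn n b)) *ᵥ (f' b)) with hGdef
  have hKentry : ∀ k l : Fin N, Continuous fun p : X × X => K p.1 p.2 k l := fun k l =>
    (continuous_apply l).comp ((continuous_apply k).comp hKcont)
  have hgm : StronglyMeasurable (fun p : X × X => g p.1 p.2) := by
    have hrw : (fun p : X × X => g p.1 p.2)
        = fun p => ∑ k, ∑ l, f' p.1 k * K p.1 p.2 k l * f' p.2 l := by
      funext p; exact dot_expand _ _ _
    rw [hrw]
    apply Measurable.stronglyMeasurable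
    apply Finset.measurable_sum; intro k _
    apply Finset.measurable_sum; intro l _
    exact (((hcomp_meas k).measurable.comp measurable_fst).mul
      (hKentry k l).measurable).mul ((hcomp_meas l).measurable.comp measurable_snd)
  have hGm : ∀ n, StronglyMeasurable (fun p : X × X => G n p.1 p.2) := by
    intro n
    have hrw : (fun p : X × X => G n p.1 p.2)
        = fun p => ∑ k, ∑ l, f' p.1 k * K (cn n p.1) (cn n p.2) k l * f' p.2 l := by
      funext p; exact dot_expand _ _ _
    rw [hrw]
    apply Measurable.stronglyMeasurable
    apply Finset.measurable_sum; intro k _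
    apply Finset.measurable_sum; intro l _
    refine (((hcomp_meas k).measurable.comp measurable_fst).mul ?_).mul
      ((hcomp_meas l).measurable.comp measurable_snd)
    exact (hKentry k l).measurable.comp
      (((hcnmeas n).comp measurable_fst).prodMk ((hcnmeas n).comp measurable_snd))
  have hgbound : ∀ a b : X, |g a b| ≤ C * (F a * F b) := fun a b =>
    dot_bound (fun k l => hC a b k l) _ _
  have hGbound : ∀ n (a b : X), |G n a b| ≤ C * (F a * F b) := fun n a b =>
    dot_bound (fun k l => hC (cn n a) (cn n b) k l) _ _
  have hlim : ∀ a b : X, Filter.Tendsto (fun n => G n a b) Filter.atTop (nhds (g a b)) := by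
    intro a b
    have h1' : Filter.Tendsto (fun n => ((cn n a, cn n b) : X × X)) Filter.atTop (nhds (a, b)) :=
      (hcn_tendsto a).prodMk_nhds (hcn_tendsto b)
    have h2' : Filter.Tendsto (fun n => K (cn n a) (cn n b)) Filter.atTop (nhds (K a b)) :=
      (hKcont.tendsto (a, b)).comp h1'
    exact ((cont_quad (f' a) (f' b)).tendsto (K a b)).comp h2'
  have key : ∀ n, 0 ≤ ∫ a, ∫ b, G n a b ∂μ ∂μ := by
    intro n
    have hAmeas : ∀ k : ℕ, MeasurableSet (m n ⁻¹' {k}) := fun k =>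
      (hmmeas n) (measurableSet_singleton k)
    have hcnA : ∀ (k : ℕ) (z : X), z ∈ m n ⁻¹' {k} → cn n z = q k := by
      intro k z hz
      rw [hcndef]; dsimp only; rw [show m n z = k from hz]
    set fM : ℕ → X → EuclideanSpace ℝ (Fin N) :=
      fun M z => if m n z < M then f' z else 0 with hfMdef
    have hfMk : ∀ (M : ℕ) z (k : Fin N), fM M z k = if m n z < M then f' z k else 0 := by
      intro M z k
      rw [hfMdef]; dsimp only
      split <;> rfl
    have hfMabs : ∀ (M : ℕ) z (k : Fin N), |fM M z k| ≤ |f' z k| := by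
      intro M z k
      rw [hfMk]; split
      · exact le_rfl
      · simp
    have hfMsum : ∀ (M : ℕ) z, (∑ k, |fM M z k|) ≤ F z := fun M z =>
      Finset.sum_le_sum fun k _ => hfMabs M z k
    have hfMsum0 : ∀ (M : ℕ) z, 0 ≤ ∑ k, |fM M z k| := fun M z =>
      Finset.sum_nonneg fun k _ => abs_nonneg _
    set H : ℕ → X → X → ℝ :=
      fun M a b => (fM M a) ⬝ᵥ ((K (cn n a) (cn n b)) *ᵥ (fM M b)) with hHdef
    have hHbound : ∀ (M : ℕ) (a b : X), |H M a b| ≤ C * (F a * F b) := by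
      intro M a b
      refine le_trans (dot_bound (fun k l => hC (cn n a) (cn n b) k l) _ _) ?_
      apply mul_le_mul_of_nonneg_left _ hC0
      exact mul_le_mul (hfMsum M a) (hfMsum M b) (hfMsum0 M b) (hF0 a)
    have hfMcomp_meas : ∀ (M : ℕ) (k : Fin N), Measurable fun z => fM M z k := by
      intro M k
      have hrw : (fun z => fM M z k) = fun z => if m n z < M then f' z k else 0 :=
        funext fun z => hfMk M z k
      rw [hrw]
      exact Measurable.ite ((hmmeas n) measurableSet_Iio) (hcomp_meas k).measurable
        measurable_const
    have hfMcomp_int : ∀ (M : ℕ) (k : Fin N), Integrable (fun z => fM M z k) μ := by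
      intro M k
      refine Integrable.mono' (hcomp_int k).abs (hfMcomp_meas M k).aestronglyMeasurable ?_
      exact Filter.Eventually.of_forall fun z => by
        rw [Real.norm_eq_abs]; exact hfMabs M z k
    have hHmeas : ∀ M : ℕ, StronglyMeasurable (fun p : X × X => H M p.1 p.2) := by
      intro M
      have hrw : (fun p : X × X => H M p.1 p.2)
          = fun p => ∑ k, ∑ l, fM M p.1 k * K (cn n p.1) (cn n p.2) k l * fM M p.2 l := by
        funext p; exact dot_expand _ _ _
      rw [hrw]
      apply Measurable.stronglyMeasurable
      apply Finset.measurable_sum; intro k _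
      apply Finset.measurable_sum; intro l _
      refine (((hfMcomp_meas M k).comp measurable_fst).mul ?_).mul
        ((hfMcomp_meas M l).comp measurable_snd)
      exact (hKentry k l).measurable.comp
        (((hcnmeas n).comp measurable_fst).prodMk ((hcnmeas n).comp measurable_snd))
    have hHlim : ∀ a b : X, Filter.Tendsto (fun M => H M a b) Filter.atTop (nhds (G n a b)) := by
      intro a b
      apply tendsto_atTop_of_eventually_const (i₀ := max (m n a) (m n b) + 1)
      intro M hM
      have ha : m n a < M := lt_of_le_of_lt (le_max_left _ _) (Nat.lt_of_succ_le hM)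
      have hb : m n b < M := lt_of_le_of_lt (le_max_right _ _) (Nat.lt_of_succ_le hM)
      rw [hHdef, hGdef]; dsimp only
      rw [hfMdef]; dsimp only
      rw [if_pos ha, if_pos hb]
    have hJM : ∀ M : ℕ, 0 ≤ ∫ a, ∫ b, H M a b ∂μ ∂μ := by
      intro M
      set ν : ℕ → Fin N → ℝ := fun l j => ∫ z in m n ⁻¹' {l}, f' z j ∂μ with hνdef
      have hHint : ∀ a, Integrable (fun b => H M a b) μ := fun a =>
        inner_integrable hFint (hHmeas M) (hHbound M) a
      have hinner : ∀ a : X, ∫ b, H M a b ∂μ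
          = ∑ l ∈ Finset.range M, ∑ k, ∑ j, fM M a k * K (cn n a) (q l) k j * ν l j := by
        intro a
        rw [decomp (hmmeas n) M (hHint a) (by
          intro z hz
          rw [hHdef]; dsimp only
          rw [hfMdef]; dsimp only
          rw [if_neg (not_lt.2 hz)]
          simp)]
        apply Finset.sum_congr rfl
        intro l hl
        have hlM : l < M := Finset.mem_range.1 hl
        have hcongr : ∫ z in m n ⁻¹' {l}, H M a z ∂μ
            = ∫ z in m n ⁻¹' {l},
                (∑ k, ∑ j, fM M a k * K (cn n a) (q l) k j * f' z j) ∂μ := by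
          apply setIntegral_congr_fun (hAmeas l)
          intro z hz
          rw [hHdef]; dsimp only
          rw [hcnA l z hz, dot_expand]
          apply Finset.sum_congr rfl; intro k _
          apply Finset.sum_congr rfl; intro j _
          rw [hfMk M z j, show m n z = l from hz, if_pos hlM]
        rw [hcongr]
        rw [integral_finset_sum _ (fun k _ => integrable_finset_sum _ fun j _ =>
          ((hcomp_int j).integrableOn).const_mul _)]
        apply Finset.sum_congr rfl; intro k _
        rw [integral_finset_sum _ (fun j _ => ((hcomp_int j).integrableOn).const_mul _)]
        apply Finset.sum_congr rfl; intro j _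
        exact integral_const_mul _ _
      have houter_int : Integrable (fun a => ∑ l ∈ Finset.range M, ∑ k, ∑ j,
          fM M a k * K (cn n a) (q l) k j * ν l j) μ := by
        apply integrable_finset_sum; intro l _
        apply integrable_finset_sum; intro k _
        apply integrable_finset_sum; intro j _
        apply Integrable.mul_const
        apply integrable_mul_bdd (hfMcomp_int M k) (c := C)
        · exact ((hKentry k j).measurable.comp
            ((hcnmeas n).prodMk measurable_const)).aestronglyMeasurable
        · exact fun a => hC _ _ k j
      have houter : ∫ a, ∫ b, H M a b ∂μ ∂μ
          = ∑ k' ∈ Finset.range M, ∑ l ∈ Finset.range M, ∑ k, ∑ j,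
              ν k' k * K (q k') (q l) k j * ν l j := by
        rw [show (fun a => ∫ b, H M a b ∂μ) = fun a => ∑ l ∈ Finset.range M, ∑ k, ∑ j,
            fM M a k * K (cn n a) (q l) k j * ν l j from funext hinner]
        rw [decomp (hmmeas n) M houter_int (by
          intro z hz
          apply Finset.sum_eq_zero; intro l _
          apply Finset.sum_eq_zero; intro k _
          apply Finset.sum_eq_zero; intro j _
          rw [hfMk, if_neg (not_lt.2 hz), zero_mul, zero_mul])]
        apply Finset.sum_congr rfl
        intro k' hk'
        have hk'M : k' < M := Finset.mem_range.1 hk'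
        have hcongr : ∫ z in m n ⁻¹' {k'}, (∑ l ∈ Finset.range M, ∑ k, ∑ j,
              fM M z k * K (cn n z) (q l) k j * ν l j) ∂μ
            = ∫ z in m n ⁻¹' {k'}, (∑ l ∈ Finset.range M, ∑ k, ∑ j,
              (K (q k') (q l) k j * ν l j) * f' z k) ∂μ := by
          apply setIntegral_congr_fun (hAmeas k')
          intro z hz
          apply Finset.sum_congr rfl; intro l _
          apply Finset.sum_congr rfl; intro k _
          apply Finset.sum_congr rfl; intro j _
          rw [hcnA k' z hz, hfMk M z k, show m n z = k' from hz, if_pos hk'M]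
          ring
        rw [hcongr]
        rw [integral_finset_sum _ (fun l _ => integrable_finset_sum _ fun k _ =>
          integrable_finset_sum _ fun j _ => ((hcomp_int k).integrableOn).const_mul _)]
        apply Finset.sum_congr rfl; intro l _
        rw [integral_finset_sum _ (fun k _ => integrable_finset_sum _ fun j _ =>
          ((hcomp_int k).integrableOn).const_mul _)]
        apply Finset.sum_congr rfl; intro k _
        rw [integral_finset_sum _ (fun j _ => ((hcomp_int k).integrableOn).const_mul _)]
        apply Finset.sum_congr rfl; intro j _
        rw [integral_const_mul]
        ring
      rw [houter]
      calc (0:ℝ) ≤ ∑ i : Fin M, ∑ j : Fin M,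
            (fun a : Fin M => ν (a : ℕ)) i ⬝ᵥ ((K (q (i : ℕ)) (q (j : ℕ))) *ᵥ ν (j : ℕ)) :=
          h1 M (fun a => q (a : ℕ)) (fun a => ν (a : ℕ))
        _ = ∑ k' ∈ Finset.range M, ∑ l ∈ Finset.range M, ∑ k, ∑ j,
              ν k' k * K (q k') (q l) k j * ν l j := by
            rw [Fin.sum_univ_eq_sum_range
              (fun k' => ∑ j : Fin M, ν k' ⬝ᵥ ((K (q k') (q (j : ℕ))) *ᵥ ν (j : ℕ)))]
            apply Finset.sum_congr rfl; intro k' _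
            rw [Fin.sum_univ_eq_sum_range (fun l => ν k' ⬝ᵥ ((K (q k') (q l)) *ᵥ ν l))]
            apply Finset.sum_congr rfl; intro l _
            exact dot_expand _ _ _
    exact ge_of_tendsto (dblDCT hFint hF0 hHmeas (hGm n) hHbound hHlim)
      (Filter.Eventually.of_forall hJM)
  exact ge_of_tendsto (dblDCT hFint hF0 hGm hgm hGbound hlim)
    (Filter.Eventually.of_forall key)

end Dir13


theorem stmt_13 {X : Type*} [MetricSpace X] [TopologicalSpace.SeparableSpace X]
    [MeasurableSpace X] [BorelSpace X]
    (μ : Measure X) [IsLocallyFiniteMeasure μ]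
    (hsupp : ∀ U : Set X, IsOpen U → U.Nonempty → 0 < μ U)
    {N : ℕ} (hN : 1 ≤ N) (K : X → X → Matrix (Fin N) (Fin N) ℝ)
    (hKcont : Continuous (fun p : X × X => K p.1 p.2))
    (hKbdd : ∃ C : ℝ, ∀ x y : X, frobNorm (K x y) ≤ C)
    (hsym : ∀ x y : X, K x y = (K y x)ᵀ) :
    List.TFAE [
      (∀ (n : ℕ) (x : Fin n → X) (c : Fin n → Fin N → ℝ),
        0 ≤ ∑ i : Fin n, ∑ j : Fin n, c i ⬝ᵥ ((K (x i) (x j)) *ᵥ c j)),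
      (∀ f : X → EuclideanSpace ℝ (Fin N), Continuous f → Integrable f μ →
        0 ≤ ∫ x, ∫ y, (f x) ⬝ᵥ ((K x y) *ᵥ (f y)) ∂μ ∂μ),
      (∀ f : X → EuclideanSpace ℝ (Fin N), Integrable f μ →
        0 ≤ ∫ x, ∫ y, (f x) ⬝ᵥ ((K x y) *ᵥ (f y)) ∂μ ∂μ)] := by
  obtain ⟨C, hCF⟩ := hKbdd
  have hC : ∀ (a b : X) (k l : Fin N), |K a b k l| ≤ C := fun a b k l =>
    le_trans (entry_le_frob (K a b) k l) (hCF a b)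
  tfae_have 3 → 2 := fun h3 f _ hint => h3 f hint
  tfae_have 2 → 1 := fun h2 => dir21 hsupp hN K hKcont hC h2
  tfae_have 1 → 3 := fun h1 f hf => dir13 hN K hKcont hC h1 f hf
  tfae_finish
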